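/- For all $b > 0$, $\frac{1}{2b+1} < \psi(b+1) - \psi(b+\tfrac12) < \frac{1}{2b}$, where $\psi$ is the digamma function. -/

import Mathlib

noncomputable def digamma (x : ℝ) : ℝ := deriv Real.Gamma x / Real.Gamma x

open Real Set Filter Topology

private lemma diffAt_logGamma {x : ℝ} (hx : 0 < x) :
    DifferentiableAt ℝ (Real.log ∘ Real.Gamma) x := by
  refine (Real.differentiableAt_Gamma ?_).log (Real.Gamma_ne_zero ?_) <;>
    exact fun m ↦ ((neg_nonpos.mpr m.cast_nonneg).trans_lt hx).ne'

private lemma digamma_eq {x : ℝ} (hx : 0 < x) :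
    digamma x = deriv (Real.log ∘ Real.Gamma) x := by
  rw [digamma, Function.comp_def, deriv.log (Real.differentiableAt_Gamma
    (fun m ↦ ((neg_nonpos.mpr m.cast_nonneg).trans_lt hx).ne')) (Real.Gamma_pos_of_pos hx).ne']

private lemma digamma_add_one {x : ℝ} (hx : 0 < x) :
    digamma (x + 1) = digamma x + 1 / x := by
  rw [digamma_eq (by linarith), digamma_eq hx]
  rw [← deriv_comp_add_const, one_div, ← Real.deriv_log,
    ← deriv_add (diffAt_logGamma hx) (Real.differentiableAt_log hx.ne')]
  apply Filter.EventuallyEq.deriv_eq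
  filter_upwards [eventually_gt_nhds hx] with y hy
  simp only [Pi.add_apply, Function.comp_apply, Real.Gamma_add_one hy.ne',
    Real.log_mul hy.ne' (Real.Gamma_pos_of_pos hy).ne', add_comm]

private lemma digamma_mono {x y : ℝ} (hx : 0 < x) (hxy : x ≤ y) :
    digamma x ≤ digamma y := by
  rw [digamma_eq hx, digamma_eq (lt_of_lt_of_le hx hxy)]
  exact Real.convexOn_log_Gamma.monotoneOn_deriv
    (fun z hz ↦ diffAt_logGamma hz) hx (lt_of_lt_of_le hx hxy) hxy

/-- The difference function. -/
private noncomputable def D (x : ℝ) : ℝ := digamma (x + 1) - digamma (x + 1/2)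

private lemma D_nonneg {x : ℝ} (hx : 0 < x) : 0 ≤ D x :=
  sub_nonneg.2 (digamma_mono (by linarith) (by linarith))

private lemma D_le {x : ℝ} (hx : 0 < x) : D x ≤ 1 / x := by
  have h1 : digamma (x + 1) = digamma x + 1 / x := digamma_add_one hx
  have h2 : digamma x ≤ digamma (x + 1/2) := digamma_mono hx (by linarith)
  simp only [D]; linarith

private lemma D_step {x : ℝ} (hx : 0 < x) :
    D x - D (x + 1) = 1 / (x + 1/2) - 1 / (x + 1) := by
  have h1 : digamma (x + 1 + 1) = digamma (x + 1) + 1 / (x + 1) :=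
    digamma_add_one (by linarith)
  have h2 : digamma (x + 1/2 + 1) = digamma (x + 1/2) + 1 / (x + 1/2) :=
    digamma_add_one (by linarith)
  have e1 : x + 1 + 1/2 = x + 1/2 + 1 := by ring
  simp only [D, e1]
  linarith

/-- Generic limit lemma: if g decreases along integer steps and g(x+n) → 0, then g(x) ≥ 0. -/
private lemma ge_zero_of_antitone_tendsto (g : ℝ → ℝ) (x : ℝ)
    (hdec : ∀ n : ℕ, g (x + (n+1)) ≤ g (x + n))
    (hlim : Tendsto (fun n : ℕ ↦ g (x + n)) atTop (𝓝 0)) : 0 ≤ g x := by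
  have key : ∀ n : ℕ, g (x + n) ≤ g x := by
    intro n
    induction n with
    | zero => simp
    | succ k ih => exact le_trans (by exact_mod_cast hdec k) ih
  exact le_of_tendsto hlim (Filter.Eventually.of_forall key)

private lemma tendsto_D (b : ℝ) (hb : 0 < b) :
    Tendsto (fun n : ℕ ↦ D (b + n)) atTop (𝓝 0) := by
  have h1 : Tendsto (fun n : ℕ ↦ 1 / (b + n)) atTop (𝓝 0) := by
    have hb' : Tendsto (fun n : ℕ ↦ b + (n:ℝ)) atTop atTop := by
      exact tendsto_atTop_add_const_left atTop b (tendsto_natCast_atTop_atTop (R := ℝ))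
    simpa only [one_div, Pi.inv_def] using hb'.inv_tendsto_atTop
  refine squeeze_zero (fun n ↦ D_nonneg (by positivity)) (fun n ↦ D_le (by positivity)) h1

theorem digamma_half_bounds (b : ℝ) (hb : 0 < b) :
    1 / (2*b + 1) < digamma (b + 1) - digamma (b + 1/2) ∧
      digamma (b + 1) - digamma (b + 1/2) < 1 / (2*b) := by
  have hDb : digamma (b + 1) - digamma (b + 1/2) = D b := rfl
  constructor
  · -- lower bound: g x = D x - 1/(2x+1) is strictly decreasing step, tends to 0
    set g : ℝ → ℝ := fun x ↦ D x - 1 / (2*x + 1) with hg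
    have hstep : ∀ x : ℝ, 0 < x → g (x + 1) < g x := by
      intro x hx
      have hD := D_step hx
      simp only [hg]
      have : 1 / (x + 1/2) - 1 / (x + 1) > 1 / (2*x + 1) - 1 / (2*(x+1) + 1) := by
        rw [gt_iff_lt, div_sub_div _ _ (by positivity) (by positivity),
          div_sub_div _ _ (by positivity) (by positivity)]
        rw [div_lt_div_iff₀ (by positivity) (by positivity)]
        nlinarith
      linarith
    have hlim : Tendsto (fun n : ℕ ↦ g ((b+1) + n)) atTop (𝓝 0) := by
      have h1 : Tendsto (fun n : ℕ ↦ D ((b+1) + n)) atTop (𝓝 0) := tendsto_D _ (by linarith)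
      have h2 : Tendsto (fun n : ℕ ↦ 1 / (2*((b+1) + n) + 1)) atTop (𝓝 0) := by
        have hb' : Tendsto (fun n : ℕ ↦ 2*((b+1) + (n:ℝ)) + 1) atTop atTop := by
          apply Filter.tendsto_atTop_add_const_right
          apply Filter.Tendsto.const_mul_atTop two_pos
          exact tendsto_atTop_add_const_left atTop (b+1) (tendsto_natCast_atTop_atTop (R := ℝ))
        simpa only [one_div, Pi.inv_def] using hb'.inv_tendsto_atTop
      simp only [hg]
      simpa using h1.sub h2
    have hge : 0 ≤ g (b + 1) := by
      apply ge_zero_of_antitone_tendsto g (b+1) _ hlim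
      intro n
      have := hstep ((b+1) + n) (by positivity)
      calc g ((b+1) + (n+1)) = g (((b+1) + n) + 1) := by ring_nf
        _ ≤ g ((b+1) + n) := le_of_lt this
    have := hstep b hb
    have hfinal : 0 < g b := lt_of_le_of_lt hge this
    simp only [hg] at hfinal
    rw [hDb]; linarith
  · -- upper bound: h x = 1/(2x) - D x is strictly decreasing step, tends to 0
    set g : ℝ → ℝ := fun x ↦ 1 / (2*x) - D x with hg
    have hstep : ∀ x : ℝ, 0 < x → g (x + 1) < g x := by
      intro x hx
      have hD := D_step hx
      simp only [hg]
      have : 1 / (2*x) - 1 / (2*(x+1)) > 1 / (x + 1/2) - 1 / (x + 1) := by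
        rw [gt_iff_lt, div_sub_div _ _ (by positivity) (by positivity),
          div_sub_div _ _ (by positivity) (by positivity)]
        rw [div_lt_div_iff₀ (by positivity) (by positivity)]
        nlinarith
      linarith
    have hlim : Tendsto (fun n : ℕ ↦ g ((b+1) + n)) atTop (𝓝 0) := by
      have h1 : Tendsto (fun n : ℕ ↦ D ((b+1) + n)) atTop (𝓝 0) := tendsto_D _ (by linarith)
      have h2 : Tendsto (fun n : ℕ ↦ 1 / (2*((b+1) + n))) atTop (𝓝 0) := by
        have hb' : Tendsto (fun n : ℕ ↦ 2*((b+1) + (n:ℝ))) atTop atTop := by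
          apply Filter.Tendsto.const_mul_atTop two_pos
          exact tendsto_atTop_add_const_left atTop (b+1) (tendsto_natCast_atTop_atTop (R := ℝ))
        simpa only [one_div, Pi.inv_def] using hb'.inv_tendsto_atTop
      simp only [hg]
      simpa using h2.sub h1
    have hge : 0 ≤ g (b + 1) := by
      apply ge_zero_of_antitone_tendsto g (b+1) _ hlim
      intro n
      have := hstep ((b+1) + n) (by positivity)
      calc g ((b+1) + (n+1)) = g (((b+1) + n) + 1) := by ring_nf
        _ ≤ g ((b+1) + n) := le_of_lt this
    have := hstep b hb
    have hfinal : 0 < g b := lt_of_le_of_lt hge this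
    simp only [hg] at hfinal
    rw [hDb]; linarith
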